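/- Gibbs sampling recovers the softmax over coherence: assume σ has full support and let β > 0. Then for every initial d-policy π₀ and every d-policy π, the Cesàro averages of the Gibbs chain started at π₀ converge to X^β: (1/(N+1))·Σ_{t=0}^{N} (K^β)^t(π₀,π) → X^β(π) as N → ∞. Equivalently, if r is sampled uniformly from {0,…,N}, the distribution of the r-th iterate of the Gibbs sampler converges to X^β as N → ∞. -/

import Mathlib

open Finset

/-- A learning system: a commutative additive monoid `M` of stochastic policies,
a finite nonempty set `S` of contexts, a finite nonempty behavior set `A s` for each
context `s`, and an inference function `inf` assigning to each policy and context a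
probability mass function on the behaviors of that context, satisfying the chain rule. -/
structure LearningSystem (M : Type) [AddCommMonoid M] (S : Type) [Fintype S] [DecidableEq S] :
    Type where
  A : S → Finset M
  A_nonempty : ∀ s, (A s).Nonempty
  inf : M → S → M → ℝ
  inf_nonneg : ∀ φ s a, 0 ≤ inf φ s a
  inf_eq_zero_of_not_mem : ∀ φ s a, a ∉ A s → inf φ s a = 0
  inf_sum_one : ∀ φ s, ∑ a ∈ A s, inf φ s a = 1
  chain_rule : ∀ (φ : M) (s₁ s₂ : S) (a₁ a₂ : M), a₁ ∈ A s₁ → a₂ ∈ A s₂ →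
    inf φ s₁ a₁ * inf (φ + a₁) s₂ a₂ = inf φ s₂ a₂ * inf (φ + a₂) s₁ a₁

namespace LearningSystem

variable {M S : Type} [AddCommMonoid M] [Fintype S] [DecidableEq S]

/-- A deterministic policy (d-policy): an assignment of a behavior `π s ∈ A s` to
every context `s ∈ S`. -/
abbrev DPolicy (L : LearningSystem M S) : Type := ∀ s : S, {a : M // a ∈ L.A s}

/-- `σ` has full support: every behavior of every context has positive probability
under every prior policy. -/
def FullSupport (L : LearningSystem M S) : Prop :=
  ∀ (φ : M) (s : S) (a : M), a ∈ L.A s → 0 < L.inf φ s a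

/-- The coherence of a d-policy `π` relative to the prior policy `φ`, computed along
the enumeration `f` of contexts:
`∑ n, log₂ σ(φ + ∑_{m<n} π(f m), f n)(π (f n))`. -/
noncomputable def cohAlong (L : LearningSystem M S) (φ : M) (π : L.DPolicy)
    {k : ℕ} (f : Fin k → S) : ℝ :=
  ∑ n : Fin k, Real.logb 2
    (L.inf (φ + ∑ m ∈ Finset.univ.filter (fun m => m < n), ((π (f m) : M)))
      (f n) ((π (f n) : M)))

/-- The product `∏ n, σ(φ + ∑_{m<n} π(f m), f n)(π (f n))` along the enumeration `f`. -/
noncomputable def prodAlong (L : LearningSystem M S) (φ : M) (π : L.DPolicy)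
    {k : ℕ} (f : Fin k → S) : ℝ :=
  ∏ n : Fin k,
    L.inf (φ + ∑ m ∈ Finset.univ.filter (fun m => m < n), ((π (f m) : M)))
      (f n) ((π (f n) : M))

/-- The coherence `χ(π)` (relative to the zero prior policy), with respect to the fixed
enumeration `e` of the contexts. -/
noncomputable def coherence (L : LearningSystem M S) {k : ℕ} (e : Fin k ≃ S)
    (π : L.DPolicy) : ℝ :=
  L.cohAlong 0 π ⇑e

/-- The softmax over coherence at inverse temperature `β`:
`X^β(π) = 2^(β χ(π)) / ∑_{π'} 2^(β χ(π'))`. -/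
noncomputable def softmaxCoh (L : LearningSystem M S) {k : ℕ} (e : Fin k ≃ S) (β : ℝ)
    (π : L.DPolicy) : ℝ :=
  (2 : ℝ) ^ (β * L.coherence e π) / ∑ π' : L.DPolicy, (2 : ℝ) ^ (β * L.coherence e π')

/-- The tempered inference function `σ^β(φ,s)(a) = σ(φ,s)(a)^β / ∑_{a'∈A_s} σ(φ,s)(a')^β`. -/
noncomputable def sigmaBeta (L : LearningSystem M S) (β : ℝ) (φ : M) (s : S) (a : M) : ℝ :=
  L.inf φ s a ^ β / ∑ a' ∈ L.A s, L.inf φ s a' ^ β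

/-- The Gibbs transition kernel on d-policies:
`K^β(π,π') = (1/k) ∑_n 1[π'(s_m) = π(s_m) ∀ m ≠ n] · σ^β(∑_{m≠n} π(s_m), s_n)(π'(s_n))`. -/
noncomputable def gibbsKernel [DecidableEq M] (L : LearningSystem M S) {k : ℕ}
    (e : Fin k ≃ S) (β : ℝ) (π π' : L.DPolicy) : ℝ :=
  ((k : ℝ))⁻¹ * ∑ n : Fin k,
    if ∀ m : Fin k, m ≠ n → π' (e m) = π (e m) then
      L.sigmaBeta β (∑ m ∈ Finset.univ.erase n, ((π (e m) : M))) (e n) ((π' (e n) : M))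
    else 0

/-- The `m`-step transition probability of the Gibbs kernel. -/
noncomputable def gibbsKernelPow [DecidableEq M] (L : LearningSystem M S) {k : ℕ}
    (e : Fin k ≃ S) (β : ℝ) : ℕ → L.DPolicy → L.DPolicy → ℝ
  | 0 => fun π π' => if π = π' then 1 else 0
  | (m + 1) => fun π π' =>
      ∑ π'' : L.DPolicy, L.gibbsKernel e β π π'' * gibbsKernelPow L e β m π'' π'

end LearningSystem

namespace LearningSystem

variable {M S : Type} [AddCommMonoid M] [Fintype S] [DecidableEq S]

/-- Sequential product of inference probabilities along a list of contexts. -/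
noncomputable def prodL (L : LearningSystem M S) (π : L.DPolicy) : M → List S → ℝ
  | _, [] => 1
  | φ, s :: l => L.inf φ s (π s : M) * L.prodL π (φ + (π s : M)) l

variable (L : LearningSystem M S)

@[simp] lemma prodL_nil (π : L.DPolicy) (φ : M) : L.prodL π φ [] = 1 := rfl

@[simp] lemma prodL_cons (π : L.DPolicy) (φ : M) (s : S) (l : List S) :
    L.prodL π φ (s :: l) = L.inf φ s (π s : M) * L.prodL π (φ + (π s : M)) l := rfl

lemma prodL_pos (hfs : L.FullSupport) (π : L.DPolicy) :
    ∀ (l : List S) (φ : M), 0 < L.prodL π φ l := by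
  intro l
  induction l with
  | nil => intro φ; exact one_pos
  | cons s l ih => intro φ; exact mul_pos (hfs φ s _ (π s).2) (ih _)

lemma prodL_perm (π : L.DPolicy) {l₁ l₂ : List S} (h : l₁.Perm l₂) :
    ∀ φ : M, L.prodL π φ l₁ = L.prodL π φ l₂ := by
  induction h with
  | nil => intro φ; rfl
  | cons x _ ih => intro φ; simp [ih]
  | swap x y l =>
      intro φ
      simp only [prodL_cons, ← mul_assoc]
      rw [L.chain_rule φ y x (π y : M) (π x : M) (π y).2 (π x).2, add_right_comm]
  | trans _ _ ih₁ ih₂ => intro φ; rw [ih₁, ih₂]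

lemma prodL_congr {π π' : L.DPolicy} :
    ∀ (l : List S), (∀ s ∈ l, π s = π' s) → ∀ φ : M, L.prodL π φ l = L.prodL π' φ l := by
  intro l
  induction l with
  | nil => intro _ _; rfl
  | cons s l ih =>
      intro h φ
      have hs : π s = π' s := h s List.mem_cons_self
      rw [prodL_cons, prodL_cons, hs, ih (fun t ht => h t (List.mem_cons_of_mem _ ht))]

lemma prodL_append_singleton (π : L.DPolicy) :
    ∀ (l : List S) (φ : M) (s : S),
      L.prodL π φ (l ++ [s]) =
        L.prodL π φ l * L.inf (φ + (l.map fun t => ((π t : M))).sum) s (π s : M) := by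
  intro l
  induction l with
  | nil => intro φ s; simp
  | cons t l ih =>
      intro φ s
      simp only [List.cons_append, prodL_cons, List.map_cons, List.sum_cons,
        ih, mul_assoc, add_assoc]

lemma prodAlong_eq_prodL (π : L.DPolicy) :
    ∀ {k : ℕ} (f : Fin k → S) (φ : M), L.prodAlong φ π f = L.prodL π φ (List.ofFn f) := by
  intro k
  induction k with
  | zero => intro f φ; simp [prodAlong]
  | succ k ih =>
      intro f φ
      have h0 : (Finset.univ.filter (fun m : Fin (k + 1) => m < (0 : Fin (k + 1)))) = ∅ := by
        ext m; simp
      have hsum : ∀ (n : Fin k) (g : Fin (k + 1) → M),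
          ∑ m ∈ Finset.univ.filter (fun m => m < n.succ), g m
            = g 0 + ∑ m ∈ Finset.univ.filter (fun m => m < n), g m.succ := by
        intro n g
        rw [Finset.sum_filter, Finset.sum_filter, Fin.sum_univ_succ]
        congr 1
        · simp [Fin.succ_pos]
      rw [List.ofFn_succ, prodL_cons, ← ih (fun i => f i.succ) (φ + (π (f 0) : M))]
      unfold prodAlong
      rw [Fin.prod_univ_succ]
      congr 1
      · rw [h0]; simp
      · refine Finset.prod_congr rfl fun n _ => ?_
        rw [hsum n (fun m => (π (f m) : M)), ← add_assoc]

lemma rpow_coherence (hfs : L.FullSupport) {k : ℕ} (e : Fin k ≃ S) (π : L.DPolicy) :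
    (2 : ℝ) ^ L.coherence e π = L.prodL π 0 (List.ofFn ⇑e) := by
  have hW : L.prodAlong 0 π ⇑e = L.prodL π 0 (List.ofFn ⇑e) := L.prodAlong_eq_prodL π ⇑e 0
  have hpos : 0 < L.prodAlong 0 π ⇑e := hW ▸ L.prodL_pos hfs π _ 0
  have h : L.coherence e π = Real.logb 2 (L.prodAlong 0 π ⇑e) := by
    rw [coherence, cohAlong, prodAlong, Real.logb_prod]
    intro n _
    exact (hfs _ _ _ (π (e n)).2).ne'
  rw [h, Real.rpow_logb (by norm_num) (by norm_num) hpos, hW]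

lemma prodL_ofFn_split {k : ℕ} (e : Fin (k + 1) ≃ S) (π : L.DPolicy) (n : Fin (k + 1)) :
    L.prodL π 0 (List.ofFn ⇑e) =
      L.prodL π 0 (List.ofFn (⇑e ∘ n.succAbove)) *
        L.inf (∑ m ∈ Finset.univ.erase n, ((π (e m) : M))) (e n) ((π (e n) : M)) := by
  have hnd₁ : (List.ofFn ⇑e).Nodup := List.nodup_ofFn.mpr e.injective
  have hinj : Function.Injective (⇑e ∘ n.succAbove) :=
    e.injective.comp Fin.succAbove_right_injective
  have hnd₂ : (e n :: List.ofFn (⇑e ∘ n.succAbove)).Nodup := by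
    refine List.nodup_cons.mpr ⟨?_, List.nodup_ofFn.mpr hinj⟩
    intro hmem
    obtain ⟨i, hi⟩ := List.mem_ofFn.mp hmem
    exact Fin.succAbove_ne n i (e.injective hi)
  have hperm : (List.ofFn ⇑e).Perm (e n :: List.ofFn (⇑e ∘ n.succAbove)) := by
    refine List.perm_of_nodup_nodup_toFinset_eq hnd₁ hnd₂ ?_
    ext s
    simp only [List.mem_toFinset, List.mem_ofFn, List.mem_cons, Function.comp_apply]
    constructor
    · rintro -
      by_cases hs : s = e n
      · exact Or.inl hs
      · obtain ⟨i, hi⟩ := Fin.exists_succAbove_eq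
          (show e.symm s ≠ n from fun hc => hs (by rw [← e.apply_symm_apply s, hc]))
        exact Or.inr ⟨i, by rw [hi, e.apply_symm_apply]⟩
    · rintro -
      exact ⟨e.symm s, e.apply_symm_apply s⟩
  have hperm2 : (List.ofFn ⇑e).Perm (List.ofFn (⇑e ∘ n.succAbove) ++ [e n]) :=
    hperm.trans (List.perm_append_singleton _ _).symm
  rw [L.prodL_perm π hperm2 0, L.prodL_append_singleton]
  congr 2
  rw [zero_add]
  have himg : Finset.univ.erase n = Finset.univ.image n.succAbove := by
    rw [← Finset.compl_singleton, ← Fin.image_succAbove_univ]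
  rw [himg, Finset.sum_image (fun a _ b _ h => Fin.succAbove_right_injective h)]
  rw [List.map_ofFn]
  rw [List.sum_ofFn]
  rfl

lemma sigmaBeta_pos (hfs : L.FullSupport) (β : ℝ) (φ : M) (s : S) {a : M}
    (ha : a ∈ L.A s) : 0 < L.sigmaBeta β φ s a := by
  have hden : 0 < ∑ a' ∈ L.A s, L.inf φ s a' ^ β := by
    obtain ⟨b, hb⟩ := L.A_nonempty s
    refine Finset.sum_pos (fun x hx => Real.rpow_pos_of_pos (hfs φ s x hx) β) ⟨b, hb⟩
  exact div_pos (Real.rpow_pos_of_pos (hfs φ s a ha) β) hden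

lemma sigmaBeta_nonneg (hfs : L.FullSupport) (β : ℝ) (φ : M) (s : S) (a : M) :
    0 ≤ L.sigmaBeta β φ s a := by
  have hden : 0 < ∑ a' ∈ L.A s, L.inf φ s a' ^ β := by
    obtain ⟨b, hb⟩ := L.A_nonempty s
    refine Finset.sum_pos (fun x hx => Real.rpow_pos_of_pos (hfs φ s x hx) β) ⟨b, hb⟩
  exact div_nonneg (Real.rpow_nonneg (L.inf_nonneg φ s a) β) hden.le

lemma sum_sigmaBeta (hfs : L.FullSupport) (β : ℝ) (φ : M) (s : S) :
    ∑ b : {a : M // a ∈ L.A s}, L.sigmaBeta β φ s (b : M) = 1 := by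
  have hden : 0 < ∑ a' ∈ L.A s, L.inf φ s a' ^ β := by
    obtain ⟨b, hb⟩ := L.A_nonempty s
    refine Finset.sum_pos (fun x hx => Real.rpow_pos_of_pos (hfs φ s x hx) β) ⟨b, hb⟩
  rw [Finset.univ_eq_attach]
  have : ∑ b ∈ (L.A s).attach, L.sigmaBeta β φ s (b : M) = ∑ a ∈ L.A s, L.sigmaBeta β φ s a :=
    Finset.sum_attach _ _
  rw [this]
  unfold sigmaBeta
  rw [← Finset.sum_div, div_self hden.ne']

lemma forall_off_iff {k : ℕ} (e : Fin k ≃ S) (π π' : L.DPolicy) (n : Fin k) :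
    (∀ m : Fin k, m ≠ n → π' (e m) = π (e m)) ↔ ∀ s : S, s ≠ e n → π' s = π s := by
  constructor
  · intro h s hs
    obtain ⟨m, rfl⟩ := e.surjective s
    exact h m fun hc => hs (by rw [hc])
  · intro h m hm
    exact h (e m) fun hc => hm (e.injective hc)

lemma sum_policy_update [DecidableEq M] (π : L.DPolicy) (s₀ : S)
    (g : {a : M // a ∈ L.A s₀} → ℝ) :
    ∑ π' : L.DPolicy, (if ∀ s : S, s ≠ s₀ → π' s = π s then g (π' s₀) else 0)
      = ∑ b : {a : M // a ∈ L.A s₀}, g b := by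
  rw [← Finset.sum_filter]
  refine Finset.sum_bij' (fun π' _ => π' s₀)
    (fun b _ => Function.update π s₀ b) ?_ ?_ ?_ ?_ ?_
  · intro a _; exact Finset.mem_univ _
  · intro b _
    refine Finset.mem_filter.mpr ⟨Finset.mem_univ _, fun s hs => ?_⟩
    exact Function.update_of_ne hs b π
  · intro π' hπ'
    have h := (Finset.mem_filter.mp hπ').2
    show Function.update π s₀ (π' s₀) = π'
    funext s
    by_cases hs : s = s₀
    · subst hs; exact Function.update_self s (π' s) π
    · rw [Function.update_of_ne hs, h s hs]
  · intro b _; exact Function.update_self s₀ b π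
  · intro π' _; rfl

lemma gibbs_row_sum [DecidableEq M] (hfs : L.FullSupport) {k : ℕ} (e : Fin k ≃ S)
    (hk : k ≠ 0) (β : ℝ) (π : L.DPolicy) :
    ∑ π' : L.DPolicy, L.gibbsKernel e β π π' = 1 := by
  unfold gibbsKernel
  rw [← Finset.mul_sum, Finset.sum_comm]
  have h1 : ∀ n : Fin k,
      (∑ π' : L.DPolicy,
        if ∀ m : Fin k, m ≠ n → π' (e m) = π (e m) then
          L.sigmaBeta β (∑ m ∈ Finset.univ.erase n, ((π (e m) : M))) (e n) ((π' (e n) : M))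
        else 0) = 1 := by
    intro n
    have := L.sum_policy_update π (e n)
      (fun b => L.sigmaBeta β (∑ m ∈ Finset.univ.erase n, ((π (e m) : M))) (e n) (b : M))
    rw [← L.sum_sigmaBeta hfs β (∑ m ∈ Finset.univ.erase n, ((π (e m) : M))) (e n), ← this]
    refine Finset.sum_congr rfl fun π' _ => ?_
    exact if_congr (L.forall_off_iff e π π' n) rfl rfl
  rw [Finset.sum_congr rfl fun n _ => h1 n]
  simp [Finset.card_univ, hk]

lemma gibbs_detailed_balance [DecidableEq M] (hfs : L.FullSupport) {k : ℕ} (e : Fin k ≃ S)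
    (β : ℝ) (π π' : L.DPolicy) :
    L.softmaxCoh e β π * L.gibbsKernel e β π π' =
      L.softmaxCoh e β π' * L.gibbsKernel e β π' π := by
  unfold softmaxCoh gibbsKernel
  rw [div_mul_eq_mul_div, div_mul_eq_mul_div]
  congr 1
  rw [mul_left_comm, mul_left_comm ((2:ℝ) ^ (β * L.coherence e π'))]
  congr 1
  rw [Finset.mul_sum, Finset.mul_sum]
  refine Finset.sum_congr rfl fun n _ => ?_
  by_cases hP : ∀ m : Fin k, m ≠ n → π' (e m) = π (e m)
  · have hP' : ∀ m : Fin k, m ≠ n → π (e m) = π' (e m) := fun m hm => (hP m hm).symm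
    rw [if_pos hP, if_pos hP']
    have hφ : (∑ m ∈ Finset.univ.erase n, ((π (e m) : M)))
        = ∑ m ∈ Finset.univ.erase n, ((π' (e m) : M)) := by
      refine Finset.sum_congr rfl fun m hm => ?_
      rw [hP m (Finset.ne_of_mem_erase hm)]
    rw [← hφ]
    set φ := ∑ m ∈ Finset.univ.erase n, ((π (e m) : M)) with hφdef
    unfold sigmaBeta
    rw [mul_div_assoc', mul_div_assoc']
    congr 1
    have h2 : ∀ ρ : L.DPolicy,
        (2:ℝ) ^ (β * L.coherence e ρ) = (L.prodL ρ 0 (List.ofFn ⇑e)) ^ β := by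
      intro ρ
      rw [mul_comm, Real.rpow_mul (by norm_num : (0:ℝ) ≤ 2), L.rpow_coherence hfs]
    rw [h2, h2, ← Real.mul_rpow (L.prodL_pos hfs π _ _).le (L.inf_nonneg _ _ _),
      ← Real.mul_rpow (L.prodL_pos hfs π' _ _).le (L.inf_nonneg _ _ _)]
    congr 1
    -- key product identity
    obtain ⟨k', rfl⟩ := Nat.exists_eq_succ_of_ne_zero (Nat.pos_iff_ne_zero.mp n.pos)
    have hsplit := L.prodL_ofFn_split e π n
    have hsplit' := L.prodL_ofFn_split e π' n
    rw [← hφ] at hsplit'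
    have hR : L.prodL π 0 (List.ofFn (⇑e ∘ n.succAbove))
        = L.prodL π' 0 (List.ofFn (⇑e ∘ n.succAbove)) := by
      refine L.prodL_congr _ (fun t ht => ?_) 0
      obtain ⟨i, hi⟩ := List.mem_ofFn.mp ht
      rw [← hi]
      exact (hP (n.succAbove i) (Fin.succAbove_ne n i)).symm
    rw [hsplit, hsplit', hR, ← hφdef]
    ring
  · have hP' : ¬ ∀ m : Fin k, m ≠ n → π (e m) = π' (e m) := fun hc =>
      hP fun m hm => (hc m hm).symm
    rw [if_neg hP, if_neg hP', mul_zero, mul_zero]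


section Kernel

variable [DecidableEq M]

lemma gibbsKernel_nonneg (hfs : L.FullSupport) {k : ℕ} (e : Fin k ≃ S) (β : ℝ)
    (p q : L.DPolicy) : 0 ≤ L.gibbsKernel e β p q := by
  refine mul_nonneg (inv_nonneg.mpr (Nat.cast_nonneg k)) (Finset.sum_nonneg fun n _ => ?_)
  split
  · exact L.sigmaBeta_nonneg hfs β _ _ _
  · exact le_rfl

lemma gibbsKernelPow_nonneg (hfs : L.FullSupport) {k : ℕ} (e : Fin k ≃ S) (β : ℝ) :
    ∀ (t : ℕ) (p q : L.DPolicy), 0 ≤ L.gibbsKernelPow e β t p q := by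
  intro t
  induction t with
  | zero => intro p q; simp only [gibbsKernelPow]; split <;> norm_num
  | succ t ih =>
      intro p q
      simp only [gibbsKernelPow]
      exact Finset.sum_nonneg fun r _ => mul_nonneg (L.gibbsKernel_nonneg hfs e β p r) (ih r q)

lemma gibbsKernelPow_row_sum (hfs : L.FullSupport) {k : ℕ} (e : Fin k ≃ S) (hk : k ≠ 0)
    (β : ℝ) : ∀ (t : ℕ) (p : L.DPolicy), ∑ q : L.DPolicy, L.gibbsKernelPow e β t p q = 1 := by
  intro t
  induction t with
  | zero => intro p; simp [gibbsKernelPow]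
  | succ t ih =>
      intro p
      simp only [gibbsKernelPow]
      rw [Finset.sum_comm]
      have : ∀ r : L.DPolicy,
          ∑ q : L.DPolicy, L.gibbsKernel e β p r * L.gibbsKernelPow e β t r q
            = L.gibbsKernel e β p r := by
        intro r; rw [← Finset.mul_sum, ih r, mul_one]
      rw [Finset.sum_congr rfl fun r _ => this r]
      exact L.gibbs_row_sum hfs e hk β p

lemma gibbsKernelPow_one {k : ℕ} (e : Fin k ≃ S) (β : ℝ) (p q : L.DPolicy) :
    L.gibbsKernelPow e β 1 p q = L.gibbsKernel e β p q := by
  simp [gibbsKernelPow]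

lemma gibbsKernelPow_succ_right {k : ℕ} (e : Fin k ≃ S) (β : ℝ) :
    ∀ (t : ℕ) (p q : L.DPolicy), L.gibbsKernelPow e β (t + 1) p q
      = ∑ r : L.DPolicy, L.gibbsKernelPow e β t p r * L.gibbsKernel e β r q := by
  intro t
  induction t with
  | zero =>
      intro p q
      rw [L.gibbsKernelPow_one e β p q]
      simp [gibbsKernelPow]
  | succ t ih =>
      intro p q
      show (∑ r : L.DPolicy, L.gibbsKernel e β p r * L.gibbsKernelPow e β (t + 1) r q) = _
      rw [Finset.sum_congr rfl fun r _ => by rw [ih r q]]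
      simp only [Finset.mul_sum, Finset.sum_mul]
      rw [Finset.sum_comm]
      refine Finset.sum_congr rfl fun r _ => ?_
      show ∑ x : L.DPolicy, L.gibbsKernel e β p x * (L.gibbsKernelPow e β t x r * L.gibbsKernel e β r q)
          = _
      simp only [← mul_assoc]
      rw [← Finset.sum_mul]
      rfl

lemma gibbsKernelPow_add {k : ℕ} (e : Fin k ≃ S) (β : ℝ) :
    ∀ (b a : ℕ) (p q : L.DPolicy), L.gibbsKernelPow e β (a + b) p q
      = ∑ r : L.DPolicy, L.gibbsKernelPow e β a p r * L.gibbsKernelPow e β b r q := by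
  intro b
  induction b with
  | zero => intro a p q; simp [gibbsKernelPow]
  | succ b ih =>
      intro a p q
      rw [show a + (b + 1) = (a + b) + 1 from rfl, L.gibbsKernelPow_succ_right e β (a + b) p q]
      rw [Finset.sum_congr rfl fun r _ => by rw [ih a p r]]
      simp only [Finset.sum_mul]
      rw [Finset.sum_comm]
      refine Finset.sum_congr rfl fun r _ => ?_
      rw [L.gibbsKernelPow_succ_right e β b r q, Finset.mul_sum]
      refine Finset.sum_congr rfl fun x _ => ?_
      ring

lemma softmax_sum_one {k : ℕ} (e : Fin k ≃ S) (β : ℝ) :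
    ∑ p : L.DPolicy, L.softmaxCoh e β p = 1 := by
  haveI : Nonempty L.DPolicy :=
    ⟨fun s => ⟨(L.A_nonempty s).choose, (L.A_nonempty s).choose_spec⟩⟩
  have hZ : 0 < ∑ π' : L.DPolicy, (2 : ℝ) ^ (β * L.coherence e π') :=
    Finset.sum_pos (fun _ _ => Real.rpow_pos_of_pos (by norm_num) _) Finset.univ_nonempty
  unfold softmaxCoh
  rw [← Finset.sum_div, div_self hZ.ne']

lemma softmax_stationary (hfs : L.FullSupport) {k : ℕ} (e : Fin k ≃ S) (hk : k ≠ 0) (β : ℝ) :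
    ∀ (t : ℕ) (q : L.DPolicy),
      ∑ p : L.DPolicy, L.softmaxCoh e β p * L.gibbsKernelPow e β t p q
        = L.softmaxCoh e β q := by
  have h1 : ∀ q : L.DPolicy,
      ∑ p : L.DPolicy, L.softmaxCoh e β p * L.gibbsKernel e β p q = L.softmaxCoh e β q := by
    intro q
    rw [Finset.sum_congr rfl fun p _ => L.gibbs_detailed_balance hfs e β p q,
      ← Finset.mul_sum, L.gibbs_row_sum hfs e hk β q, mul_one]
  intro t
  induction t with
  | zero =>
      intro q
      simp only [gibbsKernelPow, mul_ite, mul_one, mul_zero]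
      rw [Finset.sum_ite_eq' Finset.univ q]
      simp
  | succ t ih =>
      intro q
      simp only [gibbsKernelPow]
      have : ∀ p : L.DPolicy,
          L.softmaxCoh e β p * ∑ r : L.DPolicy, L.gibbsKernel e β p r * L.gibbsKernelPow e β t r q
            = ∑ r : L.DPolicy, L.softmaxCoh e β p * L.gibbsKernel e β p r * L.gibbsKernelPow e β t r q := by
        intro p; rw [Finset.mul_sum]; exact Finset.sum_congr rfl fun r _ => by ring
      rw [Finset.sum_congr rfl fun p _ => this p, Finset.sum_comm]
      have h2 : ∀ r : L.DPolicy,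
          ∑ p : L.DPolicy, L.softmaxCoh e β p * L.gibbsKernel e β p r * L.gibbsKernelPow e β t r q
            = L.softmaxCoh e β r * L.gibbsKernelPow e β t r q := by
        intro r
        rw [← Finset.sum_mul, h1 r]
      rw [Finset.sum_congr rfl fun r _ => h2 r]
      exact ih q

lemma gibbsKernelPow_pos (hfs : L.FullSupport) {k : ℕ} (e : Fin k ≃ S) (β : ℝ)
    (p q : L.DPolicy) : 0 < L.gibbsKernelPow e β k p q := by
  by_cases hk : k = 0
  · subst hk
    have hpq : p = q := funext fun s => (Fin.elim0 (e.symm s))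
    subst hpq
    simp [gibbsKernelPow]
  have hkpos : 0 < k := Nat.pos_of_ne_zero hk
  set ρ : ℕ → L.DPolicy := fun t s => if ((e.symm s : ℕ) < t) then q s else p s with hρ
  have hρ0 : ρ 0 = p := by funext s; simp [hρ]
  have hρk : ρ k = q := by funext s; simp [hρ, (e.symm s).isLt]
  have hstep : ∀ t : ℕ, t < k → 0 < L.gibbsKernel e β (ρ t) (ρ (t + 1)) := by
    intro t ht
    unfold gibbsKernel
    refine mul_pos (inv_pos.mpr (by exact_mod_cast hkpos)) ?_
    refine Finset.sum_pos' (fun n _ => ?_) ⟨⟨t, ht⟩, Finset.mem_univ _, ?_⟩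
    · split
      · exact L.sigmaBeta_nonneg hfs β _ _ _
      · exact le_rfl
    · rw [if_pos ?_]
      · exact L.sigmaBeta_pos hfs β _ _ (ρ (t + 1) (e ⟨t, ht⟩)).2
      · intro m hm
        show ρ (t + 1) (e m) = ρ t (e m)
        simp only [hρ, Equiv.symm_apply_apply]
        have hne : (m : ℕ) ≠ t := fun hc => hm (Fin.ext hc)
        by_cases h1 : (m : ℕ) < t
        · rw [if_pos (Nat.lt_succ_of_lt h1), if_pos h1]
        · rw [if_neg (by omega), if_neg h1]
  have main : ∀ i : ℕ, i ≤ k → 0 < L.gibbsKernelPow e β i (ρ (k - i)) q := by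
    intro i
    induction i with
    | zero =>
        intro _
        rw [Nat.sub_zero, hρk]
        simp [gibbsKernelPow]
    | succ i ih =>
        intro hik
        have h1 : k - (i + 1) + 1 = k - i := by omega
        have h2 : k - (i + 1) < k := by omega
        show 0 < ∑ r : L.DPolicy,
          L.gibbsKernel e β (ρ (k - (i + 1))) r * L.gibbsKernelPow e β i r q
        have hterm : 0 < L.gibbsKernel e β (ρ (k - (i + 1))) (ρ (k - i)) *
            L.gibbsKernelPow e β i (ρ (k - i)) q := by
          refine mul_pos ?_ (ih (by omega))
          have := hstep (k - (i + 1)) h2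
          rwa [h1] at this
        refine lt_of_lt_of_le hterm
          (Finset.single_le_sum (f := fun r =>
            L.gibbsKernel e β (ρ (k - (i + 1))) r * L.gibbsKernelPow e β i r q)
            (fun r _ => mul_nonneg (L.gibbsKernel_nonneg hfs e β _ r)
              (L.gibbsKernelPow_nonneg hfs e β i r q)) (Finset.mem_univ _))
  have := main k le_rfl
  rwa [Nat.sub_self, hρ0] at this

end Kernel

end LearningSystem


/-- Gibbs sampling recovers the softmax over coherence: if `σ` has full support and
`β > 0`, then for every initial d-policy `π₀` and every d-policy `π`, the Cesàro
averages of the Gibbs chain started at `π₀` converge to `X^β`: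
`(1/(N+1)) ∑_{t=0}^{N} (K^β)^t(π₀,π) → X^β(π)` as `N → ∞`; equivalently, the
distribution of the `r`-th iterate with `r` uniform on `{0,…,N}` converges to `X^β`. -/
theorem gibbs_recovers_softmax {M S : Type} [AddCommMonoid M] [DecidableEq M]
    [Fintype S] [DecidableEq S] [Nonempty S] (L : LearningSystem M S)
    (hfs : L.FullSupport) {k : ℕ} (e : Fin k ≃ S) (β : ℝ) (hβ : 0 < β)
    (π₀ π : L.DPolicy) :
    Filter.Tendsto
      (fun N : ℕ => ((N : ℝ) + 1)⁻¹ *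
        ∑ t ∈ Finset.range (N + 1), L.gibbsKernelPow e β t π₀ π)
      Filter.atTop (nhds (L.softmaxCoh e β π)) := by
  haveI : Nonempty (Fin k) := ⟨e.symm (Classical.arbitrary S)⟩
  have hk : 0 < k := Fin.pos_iff_nonempty.mpr ‹_›
  haveI hne : Nonempty L.DPolicy :=
    ⟨fun s => ⟨(L.A_nonempty s).choose, (L.A_nonempty s).choose_spec⟩⟩
  set X : L.DPolicy → ℝ := L.softmaxCoh e β with hXdef
  set K : L.DPolicy → L.DPolicy → ℝ := L.gibbsKernel e β with hKdef
  set Kp : ℕ → L.DPolicy → L.DPolicy → ℝ := L.gibbsKernelPow e β with hKpdef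
  have hXsum : ∑ p : L.DPolicy, X p = 1 := L.softmax_sum_one e β
  have hKrow : ∀ p, ∑ q : L.DPolicy, K p q = 1 := L.gibbs_row_sum hfs e hk.ne' β
  have hKnn : ∀ p q, 0 ≤ K p q := L.gibbsKernel_nonneg hfs e β
  have hKprow : ∀ t p, ∑ q : L.DPolicy, Kp t p q = 1 :=
    L.gibbsKernelPow_row_sum hfs e hk.ne' β
  have hXst : ∀ (t : ℕ) (q : L.DPolicy), ∑ p : L.DPolicy, X p * Kp t p q = X q :=
    L.softmax_stationary hfs e hk.ne' β
  have hQpos : ∀ p q : L.DPolicy, 0 < Kp k p q := L.gibbsKernelPow_pos hfs e β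
  set N : ℕ := Fintype.card L.DPolicy with hNdef
  have hNpos : 0 < N := Fintype.card_pos
  set δ : ℝ := Finset.univ.inf' Finset.univ_nonempty
    (fun pq : L.DPolicy × L.DPolicy => Kp k pq.1 pq.2) with hδdef
  have hδpos : 0 < δ := by
    rw [hδdef]
    exact (Finset.lt_inf'_iff _).mpr fun b _ => hQpos b.1 b.2
  have hδle : ∀ p q, δ ≤ Kp k p q := fun p q =>
    Finset.inf'_le _ (Finset.mem_univ (p, q))
  have hNδ : (N : ℝ) * δ ≤ 1 := by
    obtain ⟨p0⟩ := hne
    calc (N : ℝ) * δ = ∑ _q : L.DPolicy, δ := by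
          rw [Finset.sum_const, nsmul_eq_mul, Finset.card_univ]
      _ ≤ ∑ q : L.DPolicy, Kp k p0 q := Finset.sum_le_sum fun q _ => hδle p0 q
      _ = 1 := hKprow k p0
  have contraction : ∀ (Q : L.DPolicy → L.DPolicy → ℝ) (δ' : ℝ), 0 ≤ δ' →
      (∀ p q, δ' ≤ Q p q) → (∀ p, ∑ q : L.DPolicy, Q p q = 1) →
      ∀ v : L.DPolicy → ℝ, (∑ p : L.DPolicy, v p = 0) →
      ∑ q : L.DPolicy, |∑ p : L.DPolicy, v p * Q p q| ≤
        (1 - (N : ℝ) * δ') * ∑ p : L.DPolicy, |v p| := by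
    intro Q δ' hδ'0 hle hrow v hv
    have hstep : ∀ q, |∑ p : L.DPolicy, v p * Q p q|
        ≤ ∑ p : L.DPolicy, |v p| * (Q p q - δ') := by
      intro q
      have h0 : ∑ p : L.DPolicy, v p * Q p q = ∑ p : L.DPolicy, v p * (Q p q - δ') := by
        simp only [mul_sub, Finset.sum_sub_distrib, ← Finset.sum_mul, hv, zero_mul, sub_zero]
      rw [h0]
      refine (Finset.abs_sum_le_sum_abs _ _).trans (Finset.sum_le_sum fun p _ => ?_)
      rw [abs_mul, abs_of_nonneg (sub_nonneg.mpr (hle p q))]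
    calc ∑ q : L.DPolicy, |∑ p : L.DPolicy, v p * Q p q|
        ≤ ∑ q : L.DPolicy, ∑ p : L.DPolicy, |v p| * (Q p q - δ') :=
          Finset.sum_le_sum fun q _ => hstep q
      _ = ∑ p : L.DPolicy, |v p| * (1 - (N : ℝ) * δ') := by
          rw [Finset.sum_comm]
          refine Finset.sum_congr rfl fun p _ => ?_
          rw [← Finset.mul_sum]
          congr 1
          rw [Finset.sum_sub_distrib, hrow p, Finset.sum_const, nsmul_eq_mul,
            Finset.card_univ, hNdef]
      _ = (1 - (N : ℝ) * δ') * ∑ p : L.DPolicy, |v p| := by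
          rw [← Finset.sum_mul, mul_comm]
  set g : ℕ → ℝ := fun t => ∑ q : L.DPolicy, |Kp t π₀ q - X q| with hgdef
  have hgnn : ∀ t, 0 ≤ g t := fun t => Finset.sum_nonneg fun q _ => abs_nonneg _
  have hsub : ∀ t, ∑ p : L.DPolicy, (Kp t π₀ p - X p) = 0 := by
    intro t
    rw [Finset.sum_sub_distrib, hKprow t π₀, hXsum, sub_self]
  have hv1 : ∀ t q, Kp (t + 1) π₀ q - X q
      = ∑ p : L.DPolicy, (Kp t π₀ p - X p) * K p q := by
    intro t q
    have h1 : Kp (t + 1) π₀ q = ∑ p : L.DPolicy, Kp t π₀ p * K p q :=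
      L.gibbsKernelPow_succ_right e β t π₀ q
    have h2 : X q = ∑ p : L.DPolicy, X p * K p q := by
      have h := hXst 1 q
      simp only [hKpdef, L.gibbsKernelPow_one e β, ← hKdef] at h
      exact h.symm
    rw [h1, h2, ← Finset.sum_sub_distrib]
    exact Finset.sum_congr rfl fun p _ => (sub_mul _ _ _).symm
  have hvk : ∀ t q, Kp (t + k) π₀ q - X q
      = ∑ p : L.DPolicy, (Kp t π₀ p - X p) * Kp k p q := by
    intro t q
    have h1 : Kp (t + k) π₀ q = ∑ p : L.DPolicy, Kp t π₀ p * Kp k p q :=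
      L.gibbsKernelPow_add e β k t π₀ q
    conv_lhs => rw [h1, ← hXst k q]
    rw [← Finset.sum_sub_distrib]
    exact Finset.sum_congr rfl fun p _ => (sub_mul _ _ _).symm
  have hgc1 : ∀ t, g (t + 1) ≤ g t := by
    intro t
    have h := contraction K 0 le_rfl (fun p q => by simpa using hKnn p q) hKrow
      (fun p => Kp t π₀ p - X p) (hsub t)
    simp only [mul_zero, sub_zero, one_mul] at h
    calc g (t + 1) = ∑ q : L.DPolicy, |∑ p : L.DPolicy, (Kp t π₀ p - X p) * K p q| :=
          Finset.sum_congr rfl fun q _ => by rw [hv1 t q]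
      _ ≤ ∑ p : L.DPolicy, |Kp t π₀ p - X p| := h
      _ = g t := rfl
  have hgck : ∀ t, g (t + k) ≤ (1 - (N : ℝ) * δ) * g t := by
    intro t
    have h := contraction (Kp k) δ hδpos.le hδle (hKprow k)
      (fun p => Kp t π₀ p - X p) (hsub t)
    calc g (t + k) = ∑ q : L.DPolicy, |∑ p : L.DPolicy, (Kp t π₀ p - X p) * Kp k p q| :=
          Finset.sum_congr rfl fun q _ => by rw [hvk t q]
      _ ≤ (1 - (N : ℝ) * δ) * ∑ p : L.DPolicy, |Kp t π₀ p - X p| := h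
      _ = (1 - (N : ℝ) * δ) * g t := rfl
  set c : ℝ := 1 - (N : ℝ) * δ with hcdef
  have hc0 : 0 ≤ c := sub_nonneg.mpr hNδ
  have hc1 : c < 1 := by
    have : 0 < (N : ℝ) * δ := mul_pos (by exact_mod_cast hNpos) hδpos
    simp only [hcdef]
    linarith
  have hgj : ∀ j : ℕ, g (j * k) ≤ c ^ j * g 0 := by
    intro j
    induction j with
    | zero => simp
    | succ j ih =>
        rw [Nat.succ_mul]
        calc g (j * k + k) ≤ c * g (j * k) := hgck (j * k)
          _ ≤ c * (c ^ j * g 0) := mul_le_mul_of_nonneg_left ih hc0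
          _ = c ^ (j + 1) * g 0 := by ring
  have hmono : Antitone g := antitone_nat_of_succ_le hgc1
  have hbound : ∀ t, g t ≤ c ^ (t / k) * g 0 := fun t =>
    le_trans (hmono (Nat.div_mul_le_self t k)) (hgj (t / k))
  have hglim : Filter.Tendsto g Filter.atTop (nhds 0) := by
    have hdiv : Filter.Tendsto (fun t : ℕ => t / k) Filter.atTop Filter.atTop :=
      Filter.tendsto_atTop_atTop.mpr fun b =>
        ⟨b * k, fun t ht => (Nat.le_div_iff_mul_le hk).mpr ht⟩
    have h2 : Filter.Tendsto (fun t : ℕ => c ^ (t / k) * g 0) Filter.atTop (nhds (0 * g 0)) :=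
      (Filter.Tendsto.comp (tendsto_pow_atTop_nhds_zero_of_lt_one hc0 hc1) hdiv).mul_const _
    rw [zero_mul] at h2
    exact squeeze_zero hgnn hbound h2
  have hpt : ∀ t, ‖Kp t π₀ π - X π‖ ≤ g t := by
    intro t
    rw [Real.norm_eq_abs]
    exact Finset.single_le_sum (f := fun q => |Kp t π₀ q - X q|)
      (fun q _ => abs_nonneg _) (Finset.mem_univ π)
  have hconv : Filter.Tendsto (fun t => Kp t π₀ π) Filter.atTop (nhds (X π)) := by
    rw [← tendsto_sub_nhds_zero_iff]
    exact squeeze_zero_norm hpt hglim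
  have hc := hconv.cesaro.comp (Filter.tendsto_add_atTop_nat 1)
  simpa [Function.comp_def, Nat.cast_add, Nat.cast_one] using hc
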